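/- As formal power series in X over ℚ[x] (after clearing the denominators e^X − 1): ( X·e^X/(e^X − 1) − x·X − 1 ) · e^{xX}/(1 − e^X) = d/dX ( X·e^{xX}/(e^X − 1) ). Equivalently, ( X·e^X/(e^X − 1) − x·X − 1 ) · e^{xX}/(1 − e^X) = Σ_{j≥0} B_{j+1}(x)·X^j/j!. -/

import Mathlib

open PowerSeries

private lemma deriv_exp' : derivativeFun (exp ℝ) = exp ℝ := by
  ext n
  change coeff n (d⁄dX ℝ _) = _
  rw [coeff_derivativeFun, coeff_exp, coeff_exp]
  push_cast
  rw [Nat.factorial_succ]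
  push_cast
  field_simp

private lemma deriv_rescale_exp (x : ℝ) :
    derivativeFun (rescale x (exp ℝ)) = C x * rescale x (exp ℝ) := by
  ext n
  change coeff n (d⁄dX ℝ _) = _
  rw [coeff_derivativeFun, coeff_rescale, coeff_C_mul, coeff_rescale, coeff_exp, coeff_exp]
  push_cast
  rw [Nat.factorial_succ]
  push_cast
  field_simp
  ring

private lemma deriv_bern (x : ℝ) :
    derivativeFun (mk fun n => Polynomial.aeval x ((1 / (n.factorial : ℚ)) • Polynomial.bernoulli n)) =
      mk fun j => Polynomial.aeval x ((1 / (j.factorial : ℚ)) • Polynomial.bernoulli (j + 1)) := by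
  ext n
  change coeff n (d⁄dX ℝ _) = _
  rw [coeff_derivativeFun, coeff_mk, coeff_mk, map_smul, map_smul, Rat.smul_def, Rat.smul_def,
    Nat.factorial_succ]
  have h : (n.factorial : ℝ) ≠ 0 := by positivity
  push_cast
  field_simp

/-- `(X·e^X/(e^X − 1) − x·X − 1) · e^{xX}/(1 − e^X) = Σ_{j≥0} B_{j+1}(x)·X^j/j!`,
stated with the denominators `(e^X − 1)²` cleared (note `1/(1−e^X) = −1/(e^X−1)`). -/
theorem bernoulli_residue_series (x : ℝ) :
    -((PowerSeries.X * PowerSeries.exp ℝ -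
          (PowerSeries.C x * PowerSeries.X + 1) * (PowerSeries.exp ℝ - 1)) *
        PowerSeries.rescale x (PowerSeries.exp ℝ)) =
      (PowerSeries.mk fun j =>
          Polynomial.aeval x ((1 / (j.factorial : ℚ)) • Polynomial.bernoulli (j + 1))) *
        (PowerSeries.exp ℝ - 1) ^ 2 := by
  have H := Polynomial.bernoulli_generating_function x
  set B : ℝ⟦X⟧ := mk fun n => Polynomial.aeval x ((1 / (n.factorial : ℚ)) • Polynomial.bernoulli n) with hB
  set B' : ℝ⟦X⟧ := mk fun j => Polynomial.aeval x ((1 / (j.factorial : ℚ)) • Polynomial.bernoulli (j + 1)) with hB'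
  have H' := congrArg (d⁄dX ℝ) H
  rw [Derivation.leibniz, Derivation.leibniz, map_sub, Derivation.map_one_eq_zero, sub_zero] at H'
  have e1 : d⁄dX ℝ (exp ℝ) = exp ℝ := deriv_exp'
  have e2 : d⁄dX ℝ (rescale x (exp ℝ)) = C x * rescale x (exp ℝ) := deriv_rescale_exp x
  have e3 : d⁄dX ℝ B = B' := deriv_bern x
  rw [e1, e2, e3, derivative_X] at H'
  simp only [smul_eq_mul, sub_zero, mul_one] at H'
  linear_combination exp ℝ * H - (exp ℝ - 1) * H'
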